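/- For system (C), the parabola f₂(x,y) = ((g − 1)/g)·x² + y = 0 is an invariant algebraic curve if and only if ℓ = 0; moreover, when ℓ = 0 the polynomial identity p·∂f₂/∂x + q·∂f₂/∂y = K₂·f₂ holds with cofactor K₂(x,y) = 2g·x. -/

import Mathlib

open MvPolynomial

/-- Right-hand side p of system (C). -/
noncomputable def pC (g : ℝ) : MvPolynomial (Fin 2) ℝ :=
  C g * X 1 + C g * X 0 ^ 2

/-- Right-hand side q of system (C). -/
noncomputable def qC (ℓ : ℝ) : MvPolynomial (Fin 2) ℝ :=
  C ℓ * X 1 + C 2 * X 0 * X 1 + C ℓ * X 0 ^ 2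

/-- The parabola `f₂ = ((g - 1)/g)x² + y`. -/
noncomputable def f2C (g : ℝ) : MvPolynomial (Fin 2) ℝ :=
  C ((g - 1) / g) * X 0 ^ 2 + X 1

lemma keyC (g ℓ : ℝ) (hg : g ≠ 0) :
    pC g * pderiv 0 (f2C g) + qC ℓ * pderiv 1 (f2C g)
      = (C (2 * g) * X 0) * f2C g + C ℓ * (X 1 + X 0 ^ 2) := by
  have h : (C g : MvPolynomial (Fin 2) ℝ) * C ((g - 1) / g) = C g - 1 := by
    rw [← C_mul, ← C_1, ← C_sub]
    congr 1
    field_simp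
  unfold pC qC f2C
  simp only [map_add, Derivation.leibniz, Derivation.leibniz_pow, pderiv_C, pderiv_X_self,
    pderiv_X_of_ne (show (1 : Fin 2) ≠ 0 by decide),
    pderiv_X_of_ne (show (0 : Fin 2) ≠ 1 by decide),
    C_mul, map_ofNat, smul_eq_mul, mul_zero, zero_mul, zero_add, add_zero, mul_one, one_mul]
  linear_combination (2 * X 0 * X 1 : MvPolynomial (Fin 2) ℝ) * h

/-- For system (C), the parabola `f₂ = 0` is an invariant algebraic curve if and only
if `ℓ = 0`; moreover when `ℓ = 0` the identity holds with cofactor `K₂ = 2g·x`. -/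
theorem invariant_parabola_f2_sysC (g ℓ : ℝ) (hg : g ≠ 0) :
    ((∃ K : MvPolynomial (Fin 2) ℝ,
        pC g * pderiv 0 (f2C g) + qC ℓ * pderiv 1 (f2C g)
          = K * f2C g) ↔ ℓ = 0) ∧
    (ℓ = 0 →
      pC g * pderiv 0 (f2C g) + qC ℓ * pderiv 1 (f2C g)
        = (C (2 * g) * X 0) * f2C g) := by
  have key := keyC g ℓ hg
  constructor
  · constructor
    · rintro ⟨K, hK⟩
      rw [key] at hK
      have := congrArg (eval (fun i : Fin 2 => if i = 0 then (1 : ℝ) else (1 - g) / g)) hK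
      simp [f2C, eval_add, eval_mul] at this
      have hf : (g - 1) / g + (1 - g) / g = 0 := by field_simp; ring
      rw [hf] at this
      simp at this
      have h2 : (1 - g) / g + 1 = 1 / g := by field_simp; ring
      rw [h2] at this
      rcases this with h | h
      · exact h
      · exact absurd h (one_div_ne_zero hg)
    · intro hl
      subst hl
      exact ⟨C (2 * g) * X 0, by rw [key]; simp⟩
  · intro hl
    subst hl
    rw [key]; simp
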